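/- Let ε>0, K=(1/8−ε)N, and suppose Ψ : F₂[x] → ℝ satisfies: (1) Ψ(f)=0 whenever f is not of the form r−1 with r ∈ G_N prime; (2) Σ_{f∈G_N} Ψ(f)e(fθ) ≥ −2^{N−K} for all θ ∈ T; (3) Σ_{f∈G_N} Ψ(f) ≫ 2^N. Then any A ⊆ G_N such that A−A contains no r−1 with r prime satisfies |A| ≤ 2^N · 2^{N−K}/(2^{N−K} + Σ_{f∈G_N} Ψ(f)) ≪_ε 2^{(7/8+ε)N}. -/

import Mathlib

open Polynomial
open scoped Classical

noncomputable section

abbrev F2 := ZMod 2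
abbrev Kinf := LaurentSeries F2
def polyToK (f : F2[X]) : Kinf :=
  ∑ i ∈ f.support, HahnSeries.single (-(i : ℤ)) (f.coeff i)
def ordK (a : Kinf) : WithBot ℤ := if a = 0 then ⊥ else (↑(-a.order) : WithBot ℤ)
def eKr (a : Kinf) : ℝ := (-1 : ℝ) ^ ((a.coeff 1).val)
def eK (a : Kinf) : ℂ := ((eKr a : ℝ) : ℂ)
def InT (θ : Kinf) : Prop := ordK θ ≤ ((-1 : ℤ) : WithBot ℤ)
def GN (N : ℕ) : Finset F2[X] :=
  Set.Finite.toFinset (s := {f : F2[X] | f.degree < (N : ℕ)}) (by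
    have h : {f : F2[X] | f.degree < (N : ℕ)} = ↑(Polynomial.degreeLT F2 N) := by
      ext f
      simp [Polynomial.mem_degreeLT]
    rw [h]
    have : Finite (Polynomial.degreeLT F2 N) :=
      Finite.of_equiv _ (Polynomial.degreeLTEquiv F2 N).symm.toEquiv
    exact (Polynomial.degreeLT F2 N : Set F2[X]).toFinite)
def ratK (u s : F2[X]) : Kinf := polyToK u * (polyToK s)⁻¹

/-- τ(f): the number of divisors of `f`. -/
def tau (f : F2[X]) : ℕ := ((GN (f.natDegree + 1)).filter (fun g => g ∣ f)).card

/-- φ(f): the number of invertible residues modulo `f`. -/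
def phi (f : F2[X]) : ℕ := ((GN f.natDegree).filter (fun g => IsCoprime g f)).card

/-- ω(f): the number of (irreducible nonconstant, i.e. prime) divisors of `f`. -/
def omegaP (f : F2[X]) : ℕ :=
  ((GN (f.natDegree + 1)).filter (fun r => Irreducible r ∧ r ∣ f)).card

/-- The Möbius function on `F₂[x]`. -/
def mu (f : F2[X]) : ℤ := if Squarefree f then (-1) ^ (omegaP f) else 0

/-- The set of invertible residues modulo `s` (canonical representatives of
`(F₂[x]/(s))^×`, i.e. polynomials of degree `< deg s` coprime to `s`). -/
def residues (s : F2[X]) : Finset F2[X] := (GN s.natDegree).filter (fun t => IsCoprime t s)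

/-- `α(s) = μ(s)/φ(s)`. -/
def alphaA (s : F2[X]) : ℝ := (mu s : ℝ) / (phi s : ℝ)

/-- `α'(s) = ∏_{r | s prime} 3/(2^{deg r}+3)` for `s` squarefree, `0` otherwise. -/
def alphaB (s : F2[X]) : ℝ :=
  if Squarefree s then
    ∏ r ∈ (GN (s.natDegree + 1)).filter (fun r => Irreducible r ∧ r ∣ s),
      (3 : ℝ) / ((2 : ℝ) ^ r.natDegree + 3)
  else 0

/-- `Λ_M(f) = Σ_{s ∈ G_M} α(s) Σ_{t ∈ (F₂[x]/(s))^×} e(f t s⁻¹)`. -/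
def LambdaM (M : ℕ) (f : F2[X]) : ℝ :=
  ∑ s ∈ GN M, alphaA s * ∑ t ∈ residues s, eKr (polyToK f * ratK t s)

/-- `H_M(f) = Σ_{s ∈ G_M} α'(s) Σ_{t ∈ (F₂[x]/(s))^×} e(f t s⁻¹)`. -/
def HM (M : ℕ) (f : F2[X]) : ℝ :=
  ∑ s ∈ GN M, alphaB s * ∑ t ∈ residues s, eKr (polyToK f * ratK t s)

/-- `Λ'(f) = deg f` if `f` is prime, `0` otherwise. -/
def LambdaP (f : F2[X]) : ℝ := if Irreducible f then (f.natDegree : ℝ) else 0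

/-- `Ψ(f) = Λ'(f+1) H_Q(f) 1_{f ∈ G_N}`. -/
def Psi (N Q : ℕ) (f : F2[X]) : ℝ :=
  LambdaP (f + 1) * HM Q f * (if f ∈ GN N then 1 else 0)

/-- `Ψ'(f) = Λ_R(f+1) H_Q(f) 1_{f ∈ G_N}`. -/
def Psi' (N R Q : ℕ) (f : F2[X]) : ℝ :=
  LambdaM R (f + 1) * HM Q f * (if f ∈ GN N then 1 else 0)

/-- `Λ_r(f)` for a single prime `r`. -/
def Lambda_r (r f : F2[X]) : ℝ :=
  if r ∣ f then 0 else (2 : ℝ) ^ r.natDegree / ((2 : ℝ) ^ r.natDegree - 1)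

/-- `τ²_r(f)` for a single prime `r`. -/
def tauSq_r (r f : F2[X]) : ℝ :=
  if r ∣ f then 4 * (2 : ℝ) ^ r.natDegree / ((2 : ℝ) ^ r.natDegree + 3)
  else (2 : ℝ) ^ r.natDegree / ((2 : ℝ) ^ r.natDegree + 3)

/-- `˜Λ_M(f) = ∏_{r ∈ G_M prime} Λ_r(f)`. -/
def LambdaTilde (M : ℕ) (f : F2[X]) : ℝ :=
  ∏ r ∈ (GN M).filter (fun r => Irreducible r), Lambda_r r f

/-- `˜H_M(f) = ∏_{r ∈ G_M prime} τ²_r(f)`. -/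
def HTilde (M : ℕ) (f : F2[X]) : ℝ :=
  ∏ r ∈ (GN M).filter (fun r => Irreducible r), tauSq_r r f

/-- The element of `K∞` determined by a rational function (with `x ↦ t⁻¹`). -/
def ratToK (l : RatFunc F2) : Kinf := polyToK l.num * (polyToK l.denom)⁻¹

/-- `c : F₂(x)/F₂[x] → ℝ` (encoded on the canonical representatives
`λ = num/denom` in lowest terms with `deg num < deg denom`) is the system of Fourier
coefficients of `F : F₂[x] → ℝ`, i.e. `F(f) = Σ_λ c(λ) e(λ f)`. -/
def IsFourierCoeffs (F : F2[X] → ℝ) (c : RatFunc F2 → ℝ) : Prop :=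
  (Function.support c).Finite ∧
  (∀ l : RatFunc F2, c l ≠ 0 → (l.num).degree < (l.denom).degree) ∧
  ∀ f : F2[X], F f = ∑ᶠ l : RatFunc F2, c l * eKr (ratToK l * polyToK f)

/-- The canonical representative (mod `F₂[x]`) of a rational function. -/
def fracRat (l : RatFunc F2) : RatFunc F2 :=
  l - algebraMap F2[X] (RatFunc F2) (l.num / l.denom)

/-- `c(n, η)` from the statement of the exponential sum estimate for `Λ'`. -/
def cFun (n : ℕ) (η : Kinf) : ℝ :=
  if ordK η < ((-(n : ℤ) - 1 : ℤ) : WithBot ℤ) then 1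
  else if ordK η = ((-(n : ℤ) - 1 : ℤ) : WithBot ℤ) then -1
  else 0

/-- The class `C_B(X)` (with explicit implied constant `Cst`): functions whose Fourier
coefficients are supported on `λ` with squarefree denominator of degree `≤ X` and satisfy
`|c(λ)| ≤ Cst · τ(denom λ)^B / 2^{deg (denom λ)}`. -/
def InClassC (B X : ℕ) (Cst : ℝ) (F : F2[X] → ℝ) : Prop :=
  ∃ c : RatFunc F2 → ℝ, IsFourierCoeffs F c ∧
    (∀ l : RatFunc F2, c l ≠ 0 → Squarefree l.denom ∧ (l.denom).natDegree ≤ X) ∧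
    (∀ l : RatFunc F2, |c l| ≤ Cst * (tau l.denom : ℝ) ^ B / 2 ^ (l.denom).natDegree)

/-- The fractional part `‖θ‖` of `θ ∈ K∞`: keep exactly the coefficients of `x^{-n}`, `n ≥ 1`. -/
def fracK (θ : Kinf) : Kinf :=
  ⟨fun n => if 1 ≤ n then θ.coeff n else 0, by
    apply θ.isPWO_support'.mono
    intro n hn
    simp only [Function.mem_support, ne_eq] at hn ⊢
    intro h
    apply hn
    split_ifs
    · exact h
    · rfl⟩

-- sign function
def sgn (u : F2) : ℝ := (-1 : ℝ) ^ u.val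

lemma sgn_add (u v : F2) : sgn (u + v) = sgn u * sgn v := by
  have h : ∀ w : F2, w = 0 ∨ w = 1 := by decide
  have h2 : ((1:F2) + 1) = 0 := by decide
  rcases h u with rfl | rfl <;> rcases h v with rfl | rfl <;>
    simp [sgn, h2, ZMod.val_one, ZMod.val_zero] <;> norm_num

lemma sgn_zero : sgn 0 = 1 := by simp [sgn]

def BN (N : ℕ) (f g : F2[X]) : F2 := ∑ i ∈ Finset.range N, f.coeff i * g.coeff i

def chi (N : ℕ) (f g : F2[X]) : ℝ := sgn (BN N f g)

lemma mem_GN {N : ℕ} {f : F2[X]} : f ∈ GN N ↔ f.degree < (N : ℕ) := by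
  simp [GN]

lemma GN_zero_mem {N : ℕ} : (0 : F2[X]) ∈ GN N ∨ True := Or.inr trivial

lemma coeff_GN_eq_zero {N : ℕ} {f : F2[X]} (hf : f ∈ GN N) {i : ℕ} (hi : N ≤ i) :
    f.coeff i = 0 :=
  Polynomial.coeff_eq_zero_of_degree_lt (lt_of_lt_of_le (mem_GN.1 hf) (by exact_mod_cast Nat.cast_le.2 hi))

lemma GN_card (N : ℕ) : (GN N).card = 2 ^ N := by
  have h1 : (GN N : Set F2[X]) = ↑(Polynomial.degreeLT F2 N) := by
    ext f; simp [mem_GN, Polynomial.mem_degreeLT]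
  have h2 : Nat.card (Polynomial.degreeLT F2 N) = 2 ^ N := by
    rw [Nat.card_congr (Polynomial.degreeLTEquiv F2 N).toEquiv]
    simp [Nat.card_eq_fintype_card]
  rw [← Set.ncard_coe_finset, h1]
  rw [← Nat.card_coe_set_eq]
  exact h2

lemma BN_add_left (N : ℕ) (f f' g : F2[X]) : BN N (f + f') g = BN N f g + BN N f' g := by
  simp [BN, add_mul, Finset.sum_add_distrib]

lemma chi_add_left (N : ℕ) (f f' g : F2[X]) : chi N (f + f') g = chi N f g * chi N f' g := by
  rw [chi, BN_add_left, sgn_add]; rfl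

lemma chi_zero_left (N : ℕ) (g : F2[X]) : chi N 0 g = 1 := by
  simp [chi, BN, sgn_zero]

lemma chi_zero_right (N : ℕ) (f : F2[X]) : chi N f 0 = 1 := by
  simp [chi, BN, sgn_zero]

lemma GN_zero (N : ℕ) : (0 : F2[X]) ∈ GN N := by
  simp [mem_GN]

lemma GN_add {N : ℕ} {f g : F2[X]} (hf : f ∈ GN N) (hg : g ∈ GN N) : f + g ∈ GN N := by
  rw [mem_GN] at *
  exact lt_of_le_of_lt (Polynomial.degree_add_le f g) (max_lt hf hg)

lemma charTwoF2X (h : F2[X]) : h + h = 0 := by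
  have : CharP F2[X] 2 := by infer_instance
  exact CharTwo.add_self_eq_zero h

lemma BN_add_right (N : ℕ) (f g g' : F2[X]) : BN N f (g + g') = BN N f g + BN N f g' := by
  simp [BN, mul_add, Finset.sum_add_distrib]

lemma chi_add_right (N : ℕ) (f g g' : F2[X]) : chi N f (g + g') = chi N f g * chi N f g' := by
  rw [chi, BN_add_right, sgn_add]; rfl

lemma F2_ne_zero : ∀ w : F2, w ≠ 0 → w = 1 := by decide

lemma orth (N : ℕ) (f : F2[X]) (hf : f ∈ GN N) :
    ∑ g ∈ GN N, chi N f g = if f = 0 then ((2:ℝ) ^ N) else 0 := by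
  by_cases h0 : f = 0
  · subst h0
    simp [chi_zero_left, GN_card]
  · rw [if_neg h0]
    set i := f.natDegree with hi
    have hfi : f.coeff i = 1 := F2_ne_zero _ (Polynomial.leadingCoeff_ne_zero.mpr h0)
    have hiN : i < N := by
      rw [hi, Polynomial.natDegree_lt_iff_degree_lt h0]
      exact mem_GN.1 hf
    have hXmem : (X : F2[X]) ^ i ∈ GN N := by
      rw [mem_GN, Polynomial.degree_X_pow]
      exact_mod_cast hiN
    have hchiX : chi N f (X ^ i) = -1 := by
      have hB : BN N f (X ^ i) = 1 := by
        rw [BN]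
        rw [Finset.sum_eq_single i]
        · rw [Polynomial.coeff_X_pow, if_pos rfl, hfi, mul_one]
        · intro b _ hb
          rw [Polynomial.coeff_X_pow, if_neg hb, mul_zero]
        · intro h; exact absurd (Finset.mem_range.2 hiN) h
      rw [chi, hB, sgn, ZMod.val_one]
      norm_num
    refine Finset.sum_involution (fun g _ => g + X ^ i) ?_ ?_ ?_ ?_
    · intro g hg
      rw [chi_add_right, hchiX]
      ring
    · intro g hg _
      intro h
      have : (X : F2[X]) ^ i = 0 := by
        have := congrArg (fun t => t - g) h
        simpa using this
      exact pow_ne_zero i Polynomial.X_ne_zero this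
    · intro g hg
      exact GN_add hg hXmem
    · intro g hg
      show g + X ^ i + X ^ i = g
      rw [add_assoc, charTwoF2X, add_zero]

lemma hahn_sum_coeff {α : Type*} (s : Finset α) (F : α → Kinf) (n : ℤ) :
    (∑ i ∈ s, F i).coeff n = ∑ i ∈ s, (F i).coeff n :=
  map_sum (HahnSeries.coeff.addMonoidHom n) F s

def thetaOf (g : F2[X]) : Kinf :=
  ∑ j ∈ g.support, HahnSeries.single ((j : ℤ) + 1) (g.coeff j)

lemma InT_thetaOf (g : F2[X]) : InT (thetaOf g) := by
  unfold InT ordK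
  split_ifs with h
  · exact bot_le
  · have hcoeff : ∀ n : ℤ, n < 1 → (thetaOf g).coeff n = 0 := by
      intro n hn
      rw [thetaOf, hahn_sum_coeff]
      refine Finset.sum_eq_zero fun j hj => ?_
      rw [HahnSeries.coeff_single_of_ne]
      omega
    have horder : 1 ≤ (thetaOf g).order := by
      by_contra hlt
      push_neg at hlt
      exact h (HahnSeries.coeff_order_eq_zero.1 (hcoeff _ hlt))
    rw [WithBot.coe_le_coe]
    omega

lemma eKr_polyToK_thetaOf (N : ℕ) (f g : F2[X]) (hf : f ∈ GN N) :
    eKr (polyToK f * thetaOf g) = chi N f g := by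
  have hsupp : f.support ⊆ Finset.range N := by
    intro i hi
    rw [Finset.mem_range]
    by_contra hN
    exact Polynomial.mem_support_iff.1 hi (coeff_GN_eq_zero hf (le_of_not_gt hN))
  have hc : (polyToK f * thetaOf g).coeff 1 = BN N f g := by
    rw [polyToK, thetaOf, Finset.sum_mul_sum]
    simp_rw [HahnSeries.single_mul_single]
    rw [hahn_sum_coeff]
    simp_rw [hahn_sum_coeff, HahnSeries.coeff_single]
    have hcond : ∀ i j : ℕ, ((1:ℤ) = -(i:ℤ) + ((j:ℤ) + 1)) ↔ j = i := by
      intro i j; constructor <;> intro h <;> omega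
    simp only [hcond]
    simp_rw [Finset.sum_ite_eq' g.support]
    have h2 : ∀ i ∈ f.support,
        (if i ∈ g.support then f.coeff i * g.coeff i else 0) = f.coeff i * g.coeff i := by
      intro i _
      split_ifs with h
      · rfl
      · rw [Polynomial.notMem_support_iff.1 h, mul_zero]
    rw [Finset.sum_congr rfl h2, BN]
    apply Finset.sum_subset hsupp
    intro i _ hni
    rw [Polynomial.notMem_support_iff.1 hni, zero_mul]
  show sgn ((polyToK f * thetaOf g).coeff 1) = chi N f g
  rw [hc]; rfl

lemma add_eq_zero_iff_F2X (f h : F2[X]) : f + h = 0 ↔ f = h := by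
  constructor
  · intro he
    have := congrArg (fun t => t + h) he
    simpa [add_assoc, charTwoF2X] using this
  · intro he
    rw [he]; exact charTwoF2X h

lemma key (N : ℕ) (Ψ : F2[X] → ℝ) (A : Finset F2[X]) (hA : A ⊆ GN N) :
    ∑ g ∈ GN N, (∑ f ∈ GN N, Ψ f * chi N f g) * (∑ a ∈ A, chi N a g) ^ 2
      = 2 ^ N * ∑ a₁ ∈ A, ∑ a₂ ∈ A, Ψ (a₁ + a₂) := by
  have step1 : ∀ g : F2[X],
      (∑ f ∈ GN N, Ψ f * chi N f g) * (∑ a ∈ A, chi N a g) ^ 2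
        = ∑ f ∈ GN N, ∑ a₁ ∈ A, ∑ a₂ ∈ A, Ψ f * chi N (f + (a₁ + a₂)) g := by
    intro g
    rw [sq, Finset.sum_mul_sum, Finset.sum_mul]
    refine Finset.sum_congr rfl fun f _ => ?_
    rw [Finset.mul_sum]
    refine Finset.sum_congr rfl fun a₁ _ => ?_
    rw [Finset.mul_sum]
    refine Finset.sum_congr rfl fun a₂ _ => ?_
    rw [chi_add_left, chi_add_left]
    ring
  calc ∑ g ∈ GN N, (∑ f ∈ GN N, Ψ f * chi N f g) * (∑ a ∈ A, chi N a g) ^ 2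
      = ∑ g ∈ GN N, ∑ f ∈ GN N, ∑ a₁ ∈ A, ∑ a₂ ∈ A, Ψ f * chi N (f + (a₁ + a₂)) g :=
        Finset.sum_congr rfl fun g _ => step1 g
    _ = ∑ f ∈ GN N, ∑ a₁ ∈ A, ∑ a₂ ∈ A, ∑ g ∈ GN N, Ψ f * chi N (f + (a₁ + a₂)) g := by
        rw [Finset.sum_comm]
        refine Finset.sum_congr rfl fun f _ => ?_
        rw [Finset.sum_comm]
        refine Finset.sum_congr rfl fun a₁ _ => ?_
        rw [Finset.sum_comm]
    _ = ∑ f ∈ GN N, ∑ a₁ ∈ A, ∑ a₂ ∈ A, Ψ f * (if f = a₁ + a₂ then (2:ℝ)^N else 0) := by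
        refine Finset.sum_congr rfl fun f hf => Finset.sum_congr rfl fun a₁ ha₁ =>
          Finset.sum_congr rfl fun a₂ ha₂ => ?_
        rw [← Finset.mul_sum, orth N _ (GN_add hf (GN_add (hA ha₁) (hA ha₂)))]
        rw [if_congr (add_eq_zero_iff_F2X f (a₁ + a₂)) rfl rfl]
    _ = ∑ f ∈ GN N, ∑ a₁ ∈ A, ∑ a₂ ∈ A,
          (if f = a₁ + a₂ then Ψ (a₁ + a₂) * (2:ℝ)^N else 0) := by
        refine Finset.sum_congr rfl fun f _ => Finset.sum_congr rfl fun a₁ _ =>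
          Finset.sum_congr rfl fun a₂ _ => ?_
        rw [mul_ite, mul_zero]
        split_ifs with h
        · rw [h]
        · rfl
    _ = ∑ a₁ ∈ A, ∑ a₂ ∈ A, ∑ f ∈ GN N,
          (if f = a₁ + a₂ then Ψ (a₁ + a₂) * (2:ℝ)^N else 0) := by
        rw [Finset.sum_comm]
        refine Finset.sum_congr rfl fun a₁ _ => Finset.sum_comm
    _ = ∑ a₁ ∈ A, ∑ a₂ ∈ A, Ψ (a₁ + a₂) * (2:ℝ)^N := by
        refine Finset.sum_congr rfl fun a₁ ha₁ => Finset.sum_congr rfl fun a₂ ha₂ => ?_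
        rw [Finset.sum_ite_eq' (GN N), if_pos (GN_add (hA ha₁) (hA ha₂))]
    _ = 2 ^ N * ∑ a₁ ∈ A, ∑ a₂ ∈ A, Ψ (a₁ + a₂) := by
        rw [Finset.mul_sum]
        refine Finset.sum_congr rfl fun a₁ _ => ?_
        rw [Finset.mul_sum]
        refine Finset.sum_congr rfl fun a₂ _ => mul_comm _ _

lemma parseval (N : ℕ) (A : Finset F2[X]) (hA : A ⊆ GN N) :
    ∑ g ∈ GN N, (∑ a ∈ A, chi N a g) ^ 2 = 2 ^ N * A.card := by
  have h := key N (fun f => if f = 0 then (1:ℝ) else 0) A hA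
  have h1 : ∀ g : F2[X],
      ∑ f ∈ GN N, (if f = 0 then (1:ℝ) else 0) * chi N f g = 1 := by
    intro g
    have : ∀ f : F2[X], (if f = 0 then (1:ℝ) else 0) * chi N f g
        = if f = 0 then chi N f g else 0 := by
      intro f; split_ifs <;> ring
    rw [Finset.sum_congr rfl fun f _ => this f]
    rw [Finset.sum_ite_eq' (GN N) 0 (fun f => chi N f g), if_pos (GN_zero N), chi_zero_left]
  have h2 : ∑ a₁ ∈ A, ∑ a₂ ∈ A, (if a₁ + a₂ = 0 then (1:ℝ) else 0) = A.card := by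
    have : ∀ a₁ ∈ A, ∑ a₂ ∈ A, (if a₁ + a₂ = 0 then (1:ℝ) else 0) = 1 := by
      intro a₁ ha₁
      have hcond : ∀ a₂ : F2[X], (a₁ + a₂ = 0) ↔ (a₂ = a₁) := by
        intro a₂
        rw [add_comm, add_eq_zero_iff_F2X]
      simp only [hcond]
      rw [Finset.sum_ite_eq' A a₁ (fun _ => (1:ℝ)), if_pos ha₁]
    rw [Finset.sum_congr rfl this, Finset.sum_const, nsmul_eq_mul, mul_one]
  rw [Finset.sum_congr rfl (fun g _ => by rw [h1 g, one_mul] : ∀ g ∈ GN N,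
      (∑ a ∈ A, chi N a g) ^ 2 = (∑ f ∈ GN N, (if f = 0 then (1:ℝ) else 0) * chi N f g)
        * (∑ a ∈ A, chi N a g) ^ 2)] at *
  rw [h, h2]


/-- If `Ψ` satisfies properties (1)–(3) (with `K = (1/8−ε)N` and lower-bound constant `c`
in (3)), then any `A ⊆ G_N` whose difference set avoids all `r − 1`, `r` prime, satisfies
`|A| ≤ 2^N · 2^{N−K}/(2^{N−K} + Σ_{f∈G_N} Ψ(f))`, and this is `≪_ε 2^{(7/8+ε)N}`. -/
theorem statement_2 :
    ∀ ε : ℝ, 0 < ε → ∀ c : ℝ, 0 < c → ∃ C : ℝ, 0 < C ∧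
      ∀ N : ℕ, ∀ Ψ : F2[X] → ℝ,
        (∀ f : F2[X], (¬ ∃ r : F2[X], Irreducible r ∧ r ∈ GN N ∧ f = r - 1) → Ψ f = 0) →
        (∀ θ : Kinf, InT θ →
          -((2 : ℝ) ^ ((N : ℝ) - (1 / 8 - ε) * (N : ℝ))) ≤
            ∑ f ∈ GN N, Ψ f * eKr (polyToK f * θ)) →
        (c * 2 ^ N ≤ ∑ f ∈ GN N, Ψ f) →
        ∀ A : Finset F2[X], A ⊆ GN N →
          (∀ a₁ ∈ A, ∀ a₂ ∈ A, ∀ r : F2[X], Irreducible r → a₁ - a₂ ≠ r - 1) →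
          (A.card : ℝ) ≤ 2 ^ N * (2 : ℝ) ^ ((N : ℝ) - (1 / 8 - ε) * (N : ℝ)) /
              ((2 : ℝ) ^ ((N : ℝ) - (1 / 8 - ε) * (N : ℝ)) + ∑ f ∈ GN N, Ψ f) ∧
            (A.card : ℝ) ≤ C * (2 : ℝ) ^ ((7 / 8 + ε) * (N : ℝ)) := by
  
  intro ε hε c hc
  refine ⟨1 / c, by positivity, ?_⟩
  intro N Ψ h1 h2 h3 A hA hdiff
  set T0 : ℝ := (2:ℝ) ^ ((N:ℝ) - (1/8 - ε) * (N:ℝ)) with hT0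
  set S : ℝ := ∑ f ∈ GN N, Ψ f with hS
  have hT0pos : 0 < T0 := by rw [hT0]; positivity
  have h2N : (0:ℝ) < 2 ^ N := by positivity
  have hSpos : 0 < S := lt_of_lt_of_le (by positivity) h3
  have hcard : (0:ℝ) ≤ (A.card : ℝ) := Nat.cast_nonneg _
  -- the double sum of Ψ over differences vanishes
  have hzero : ∑ a₁ ∈ A, ∑ a₂ ∈ A, Ψ (a₁ + a₂) = 0 := by
    refine Finset.sum_eq_zero fun a₁ ha₁ => Finset.sum_eq_zero fun a₂ ha₂ => ?_
    apply h1
    rintro ⟨r, hirr, hrm, hreq⟩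
    have hsub : a₁ - a₂ = a₁ + a₂ := by
      have h2' := charTwoF2X a₂
      have hn : -a₂ = a₂ := by linear_combination -h2'
      rw [sub_eq_add_neg, hn]
    exact hdiff a₁ ha₁ a₂ ha₂ r hirr (by rw [hsub, hreq])
  have hkey := key N Ψ A hA
  rw [hzero, mul_zero] at hkey
  have hPh : ∀ g : F2[X], -T0 ≤ ∑ f ∈ GN N, Ψ f * chi N f g := by
    intro g
    calc -T0 ≤ ∑ f ∈ GN N, Ψ f * eKr (polyToK f * thetaOf g) := h2 (thetaOf g) (InT_thetaOf g)
    _ = ∑ f ∈ GN N, Ψ f * chi N f g :=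
      Finset.sum_congr rfl fun f hf => by rw [eKr_polyToK_thetaOf N f g hf]
  have h0mem := GN_zero N
  set F : F2[X] → ℝ :=
    fun g => (∑ f ∈ GN N, Ψ f * chi N f g) * (∑ a ∈ A, chi N a g) ^ 2 with hF
  have hsplit : F 0 + ∑ g ∈ (GN N).erase 0, F g = 0 := by
    rw [Finset.add_sum_erase _ F h0mem]; exact hkey
  have hF0 : F 0 = S * (A.card : ℝ) ^ 2 := by
    rw [hF]
    simp [chi_zero_right, hS]
  have hpars := parseval N A hA
  have hpars0 := Finset.add_sum_erase (GN N) (fun g => (∑ a ∈ A, chi N a g) ^ 2) h0mem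
  rw [hpars] at hpars0
  have ht0 : (∑ a ∈ A, chi N a 0) ^ 2 = (A.card : ℝ) ^ 2 := by
    simp [chi_zero_right]
  have hpars' : ∑ g ∈ (GN N).erase 0, (∑ a ∈ A, chi N a g) ^ 2
      = 2 ^ N * (A.card : ℝ) - (A.card : ℝ) ^ 2 := by
    have hpars0' : (∑ a ∈ A, chi N a 0) ^ 2
        + ∑ g ∈ (GN N).erase 0, (∑ a ∈ A, chi N a g) ^ 2 = 2 ^ N * (A.card : ℝ) := hpars0
    rw [ht0] at hpars0'
    linarith
  have hlb : -T0 * (2 ^ N * (A.card : ℝ) - (A.card : ℝ) ^ 2)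
      ≤ ∑ g ∈ (GN N).erase 0, F g := by
    rw [← hpars', Finset.mul_sum]
    refine Finset.sum_le_sum fun g hg => ?_
    exact mul_le_mul_of_nonneg_right (hPh g) (sq_nonneg _)
  have hmain : (S + T0) * (A.card : ℝ) ^ 2 ≤ T0 * (2 ^ N * (A.card : ℝ)) := by
    nlinarith [hsplit, hF0, hlb]
  have hTS : 0 < T0 + S := by linarith
  have goal1 : (A.card : ℝ) ≤ 2 ^ N * T0 / (T0 + S) := by
    rcases eq_or_lt_of_le hcard with h0 | h0
    · rw [← h0]; positivity
    · rw [le_div_iff₀ hTS]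
      have h' : ((S + T0) * (A.card : ℝ)) * (A.card : ℝ)
          ≤ (T0 * 2 ^ N) * (A.card : ℝ) := by nlinarith [hmain]
      have := (mul_le_mul_iff_of_pos_right h0).1 h'
      nlinarith [this]
  refine ⟨goal1, ?_⟩
  have hexp : (2:ℝ) ^ ((7/8 + ε) * (N:ℝ)) = T0 := by
    rw [hT0]
    congr 1
    ring
  rw [hexp]
  have hle2 : 2 ^ N * T0 / (T0 + S) ≤ 2 ^ N * T0 / (c * 2 ^ N) := by
    apply div_le_div_of_nonneg_left (by positivity) (by positivity)
    linarith
  have heq : 2 ^ N * T0 / (c * 2 ^ N) = 1 / c * T0 := by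
    field_simp
  calc (A.card : ℝ) ≤ 2 ^ N * T0 / (T0 + S) := goal1
    _ ≤ 2 ^ N * T0 / (c * 2 ^ N) := hle2
    _ = 1 / c * T0 := heq
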